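/- Let p, q be coprime positive integers, μ ∈ ℂ* with pp' - qq' = 1, 0 ≤ q' < p, 0 < p' ≤ q. The Newton map σ: ℂ[[x,y]] → ℂ[[x₁,y₁]], f(x,y) ↦ f(μ^{q'}x₁^p, x₁^q(y₁+μ^{p'})), is an injective ring homomorphism. -/

import Mathlib

open MvPowerSeries Finsupp

/-- The Newton map σ = σ_{(p,q,μ)} : ℂ[[x,y]] → ℂ[[x₁,y₁]], f(x,y) ↦
f(μ^{q'} x₁^p, x₁^q(y₁ + μ^{p'})), written coefficientwise: the coefficient of
x₁^a y₁^b in σ(f) is ∑_{pα+qβ=a} c_{αβ} μ^{q'α+p'β} μ^{-p'b} C(β,b).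
(This agrees with the substitution when p, q ≥ 1 and μ ≠ 0.) -/
noncomputable def newtonSubst (p q p' q' : ℕ) (μ : ℂ)
    (f : MvPowerSeries (Fin 2) ℂ) : MvPowerSeries (Fin 2) ℂ :=
  fun e =>
    ∑ αβ ∈ (Finset.range (e 0 + 1) ×ˢ Finset.range (e 0 + 1)).filter
        (fun αβ => p * αβ.1 + q * αβ.2 = e 0),
      MvPowerSeries.coeff (R := ℂ) (single 0 αβ.1 + single 1 αβ.2) f *
        μ ^ (q' * αβ.1 + p' * αβ.2) * μ⁻¹ ^ (p' * e 1) * (αβ.2.choose (e 1) : ℂ)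

namespace NewtonAux

lemma apply0 (a b : ℕ) : ((single (0:Fin 2) a + single 1 b : Fin 2 →₀ ℕ)) 0 = a := by
  simp [Finsupp.single_apply]

lemma apply1 (a b : ℕ) : ((single (0:Fin 2) a + single 1 b : Fin 2 →₀ ℕ)) 1 = b := by
  simp [Finsupp.single_apply]

lemma fin2eq (u : Fin 2 →₀ ℕ) : u = single 0 (u 0) + single 1 (u 1) := by
  ext i; fin_cases i <;> simp [Finsupp.single_apply]

/-- The index set `{(α,β) : pα + qβ = a}`. -/
def E (p q a : ℕ) : Finset (ℕ × ℕ) :=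
  (Finset.range (a + 1) ×ˢ Finset.range (a + 1)).filter
    (fun αβ => p * αβ.1 + q * αβ.2 = a)

lemma mem_E {p q a : ℕ} (hp : 1 ≤ p) (hq : 1 ≤ q) {x : ℕ × ℕ} :
    x ∈ E p q a ↔ p * x.1 + q * x.2 = a := by
  unfold E
  simp only [Finset.mem_filter, Finset.mem_product, Finset.mem_range]
  constructor
  · tauto
  · intro h
    have h1 : x.1 ≤ p * x.1 := Nat.le_mul_of_pos_left x.1 hp
    have h2 : x.2 ≤ q * x.2 := Nat.le_mul_of_pos_left x.2 hq
    omega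

/-- The summand of the Newton map. -/
noncomputable def T (p' q' : ℕ) (μ : ℂ) (f : MvPowerSeries (Fin 2) ℂ) (γ δ d : ℕ) : ℂ :=
  MvPowerSeries.coeff (R := ℂ) (single 0 γ + single 1 δ) f *
    μ ^ (q' * γ + p' * δ) * μ⁻¹ ^ (p' * d) * (δ.choose d : ℂ)

lemma coeff_newton (p q p' q' : ℕ) (μ : ℂ) (f : MvPowerSeries (Fin 2) ℂ) (e : Fin 2 →₀ ℕ) :
    MvPowerSeries.coeff (R := ℂ) e (newtonSubst p q p' q' μ f) =
      ∑ αβ ∈ E p q (e 0), T p' q' μ f αβ.1 αβ.2 (e 1) := rfl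

lemma sum_ad_fin2 (c : Fin 2 →₀ ℕ) (G : (Fin 2 →₀ ℕ) → (Fin 2 →₀ ℕ) → ℂ) :
    ∑ uv ∈ Finset.HasAntidiagonal.antidiagonal c, G uv.1 uv.2
    = ∑ xy ∈ Finset.HasAntidiagonal.antidiagonal (c 0) ×ˢ Finset.HasAntidiagonal.antidiagonal (c 1),
        G (single 0 xy.1.1 + single 1 xy.2.1) (single 0 xy.1.2 + single 1 xy.2.2) := by
  refine Finset.sum_nbij' (fun uv => ((uv.1 0, uv.2 0), (uv.1 1, uv.2 1)))
    (fun xy => (single 0 xy.1.1 + single 1 xy.2.1, single 0 xy.1.2 + single 1 xy.2.2))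
    ?_ ?_ ?_ ?_ ?_
  · intro uv huv
    rw [Finset.HasAntidiagonal.mem_antidiagonal] at huv
    simp only [Finset.mem_product, Finset.HasAntidiagonal.mem_antidiagonal]
    constructor
    · rw [← Finsupp.add_apply, huv]
    · rw [← Finsupp.add_apply, huv]
  · intro xy hxy
    rw [Finset.mem_product, Finset.HasAntidiagonal.mem_antidiagonal, Finset.HasAntidiagonal.mem_antidiagonal] at hxy
    rw [Finset.HasAntidiagonal.mem_antidiagonal]
    have : (single (0:Fin 2) xy.1.1 + single 1 xy.2.1) + (single 0 xy.1.2 + single 1 xy.2.2)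
        = single (0:Fin 2) (xy.1.1 + xy.1.2) + single 1 (xy.2.1 + xy.2.2) := by
      simp [Finsupp.single_add]; abel
    rw [this, hxy.1, hxy.2, ← fin2eq]
  · intro uv huv
    ext : 1 <;> exact (fin2eq _).symm
  · intro xy hxy
    ext : 2 <;> simp [apply0, apply1]
  · intro uv huv
    rw [← fin2eq uv.1, ← fin2eq uv.2]

lemma T_mul (p' q' : ℕ) (μ : ℂ) (f g : MvPowerSeries (Fin 2) ℂ) (α β b : ℕ) :
    T p' q' μ (f * g) α β b
    = ∑ xy ∈ Finset.HasAntidiagonal.antidiagonal α ×ˢ Finset.HasAntidiagonal.antidiagonal β, ∑ z ∈ Finset.HasAntidiagonal.antidiagonal b,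
        T p' q' μ f xy.1.1 xy.2.1 z.1 * T p' q' μ g xy.1.2 xy.2.2 z.2 := by
  unfold T
  rw [MvPowerSeries.coeff_mul]
  rw [show (∑ uv ∈ Finset.HasAntidiagonal.antidiagonal ((single (0:Fin 2) α + single 1 β : Fin 2 →₀ ℕ)),
      MvPowerSeries.coeff (R := ℂ) uv.1 f * MvPowerSeries.coeff (R := ℂ) uv.2 g)
    = ∑ xy ∈ Finset.HasAntidiagonal.antidiagonal α ×ˢ Finset.HasAntidiagonal.antidiagonal β,
        MvPowerSeries.coeff (R := ℂ) (single 0 xy.1.1 + single 1 xy.2.1) f *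
          MvPowerSeries.coeff (R := ℂ) (single 0 xy.1.2 + single 1 xy.2.2) g from by
      rw [sum_ad_fin2 _ (fun u v => MvPowerSeries.coeff (R := ℂ) u f * MvPowerSeries.coeff (R := ℂ) v g),
        apply0, apply1]]
  rw [Finset.sum_mul, Finset.sum_mul, Finset.sum_mul]
  refine Finset.sum_congr rfl fun xy hxy => ?_
  rw [Finset.mem_product, Finset.HasAntidiagonal.mem_antidiagonal, Finset.HasAntidiagonal.mem_antidiagonal] at hxy
  obtain ⟨hx, hy⟩ := hxy
  -- Vandermonde
  have hV : ((β).choose b : ℂ) = ∑ z ∈ Finset.HasAntidiagonal.antidiagonal b,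
      (xy.2.1.choose z.1 : ℂ) * (xy.2.2.choose z.2 : ℂ) := by
    rw [← hy, Nat.add_choose_eq]; push_cast; rfl
  rw [hV, Finset.mul_sum]
  refine Finset.sum_congr rfl fun z hz => ?_
  rw [Finset.HasAntidiagonal.mem_antidiagonal] at hz
  have h1 : μ ^ (q' * α + p' * β) = μ ^ (q' * xy.1.1 + p' * xy.2.1) * μ ^ (q' * xy.1.2 + p' * xy.2.2) := by
    rw [← pow_add]; congr 1; rw [← hx, ← hy]; ring
  have h2 : μ⁻¹ ^ (p' * b) = μ⁻¹ ^ (p' * z.1) * μ⁻¹ ^ (p' * z.2) := by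
    rw [← pow_add]; congr 1; rw [← hz]; ring
  rw [h1, h2]; ring

lemma T_mul' (p' q' : ℕ) (μ : ℂ) (f g : MvPowerSeries (Fin 2) ℂ) (α β b : ℕ) :
    T p' q' μ (f * g) α β b
    = ∑ xyz ∈ (Finset.HasAntidiagonal.antidiagonal α ×ˢ Finset.HasAntidiagonal.antidiagonal β) ×ˢ Finset.HasAntidiagonal.antidiagonal b,
        T p' q' μ f xyz.1.1.1 xyz.1.2.1 xyz.2.1 * T p' q' μ g xyz.1.1.2 xyz.1.2.2 xyz.2.2 := by
  rw [Finset.sum_product, T_mul]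

lemma newton_mul (p q p' q' : ℕ) (hp : 1 ≤ p) (hq : 1 ≤ q) (μ : ℂ)
    (f g : MvPowerSeries (Fin 2) ℂ) :
    newtonSubst p q p' q' μ (f * g) =
      newtonSubst p q p' q' μ f * newtonSubst p q p' q' μ g := by
  apply MvPowerSeries.ext; intro e
  set a := e 0 with ha
  set b := e 1 with hb
  rw [coeff_newton, MvPowerSeries.coeff_mul]
  calc
    ∑ αβ ∈ E p q a, T p' q' μ (f * g) αβ.1 αβ.2 b
      = ∑ αβ ∈ E p q a, ∑ xyz ∈ (Finset.HasAntidiagonal.antidiagonal αβ.1 ×ˢ Finset.HasAntidiagonal.antidiagonal αβ.2) ×ˢ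
            Finset.HasAntidiagonal.antidiagonal b,
          T p' q' μ f xyz.1.1.1 xyz.1.2.1 xyz.2.1 * T p' q' μ g xyz.1.1.2 xyz.1.2.2 xyz.2.2 := by
        exact Finset.sum_congr rfl fun αβ _ => T_mul' p' q' μ f g αβ.1 αβ.2 b
    _ = ∑ s ∈ (E p q a).sigma (fun αβ => (Finset.HasAntidiagonal.antidiagonal αβ.1 ×ˢ Finset.HasAntidiagonal.antidiagonal αβ.2) ×ˢ
            Finset.HasAntidiagonal.antidiagonal b),
          T p' q' μ f s.2.1.1.1 s.2.1.2.1 s.2.2.1 * T p' q' μ g s.2.1.1.2 s.2.1.2.2 s.2.2.2 := by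
        rw [Finset.sum_sigma']
    _ = ∑ s ∈ ((Finset.HasAntidiagonal.antidiagonal a ×ˢ Finset.HasAntidiagonal.antidiagonal b)).sigma
            (fun wz => E p q wz.1.1 ×ˢ E p q wz.1.2),
          T p' q' μ f s.2.1.1 s.2.1.2 s.1.2.1 * T p' q' μ g s.2.2.1 s.2.2.2 s.1.2.2 := by
        refine Finset.sum_nbij'
          (fun s => ⟨((p * s.2.1.1.1 + q * s.2.1.2.1, p * s.2.1.1.2 + q * s.2.1.2.2), s.2.2),
            ((s.2.1.1.1, s.2.1.2.1), (s.2.1.1.2, s.2.1.2.2))⟩)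
          (fun s => ⟨(s.2.1.1 + s.2.2.1, s.2.1.2 + s.2.2.2), (((s.2.1.1, s.2.2.1),
            (s.2.1.2, s.2.2.2)), s.1.2)⟩) ?_ ?_ ?_ ?_ ?_
        · rintro ⟨⟨α, β⟩, ⟨⟨x1, x2⟩, ⟨y1, y2⟩⟩, ⟨z1, z2⟩⟩ hs
          simp only [Finset.mem_sigma, Finset.mem_product, Finset.HasAntidiagonal.mem_antidiagonal,
            mem_E hp hq] at hs
          obtain ⟨hE, ⟨hx, hy⟩, hz⟩ := hs
          refine Finset.mem_sigma.mpr ⟨Finset.mem_product.mpr ⟨Finset.HasAntidiagonal.mem_antidiagonal.mpr ?_,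
            Finset.HasAntidiagonal.mem_antidiagonal.mpr hz⟩, Finset.mem_product.mpr
            ⟨(mem_E hp hq).mpr rfl, (mem_E hp hq).mpr rfl⟩⟩
          rw [← hE, ← hx, ← hy]; ring
        · rintro ⟨⟨⟨w1, w2⟩, ⟨z1, z2⟩⟩, ⟨c1, c2⟩, ⟨d1, d2⟩⟩ hs
          simp only [Finset.mem_sigma, Finset.mem_product, Finset.HasAntidiagonal.mem_antidiagonal,
            mem_E hp hq] at hs
          obtain ⟨⟨hw, hz⟩, hc, hd⟩ := hs
          refine Finset.mem_sigma.mpr ⟨(mem_E hp hq).mpr ?_, Finset.mem_product.mpr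
            ⟨Finset.mem_product.mpr ⟨Finset.HasAntidiagonal.mem_antidiagonal.mpr rfl,
              Finset.HasAntidiagonal.mem_antidiagonal.mpr rfl⟩, Finset.HasAntidiagonal.mem_antidiagonal.mpr hz⟩⟩
          rw [← hw, ← hc, ← hd]; ring
        · rintro ⟨⟨α, β⟩, ⟨⟨x1, x2⟩, ⟨y1, y2⟩⟩, ⟨z1, z2⟩⟩ hs
          simp only [Finset.mem_sigma, Finset.mem_product, Finset.HasAntidiagonal.mem_antidiagonal,
            mem_E hp hq] at hs
          obtain ⟨hE, ⟨hx, hy⟩, hz⟩ := hs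
          subst hx; subst hy; rfl
        · rintro ⟨⟨⟨w1, w2⟩, ⟨z1, z2⟩⟩, ⟨c1, c2⟩, ⟨d1, d2⟩⟩ hs
          simp only [Finset.mem_sigma, Finset.mem_product, Finset.HasAntidiagonal.mem_antidiagonal,
            mem_E hp hq] at hs
          obtain ⟨⟨hw, hz⟩, hc, hd⟩ := hs
          subst hc; subst hd; rfl
        · rintro ⟨⟨α, β⟩, ⟨⟨x1, x2⟩, ⟨y1, y2⟩⟩, ⟨z1, z2⟩⟩ hs
          rfl
    _ = ∑ wz ∈ Finset.HasAntidiagonal.antidiagonal a ×ˢ Finset.HasAntidiagonal.antidiagonal b,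
          ∑ cd ∈ E p q wz.1.1 ×ˢ E p q wz.1.2,
            T p' q' μ f cd.1.1 cd.1.2 wz.2.1 * T p' q' μ g cd.2.1 cd.2.2 wz.2.2 := by
        rw [Finset.sum_sigma']
    _ = ∑ wz ∈ Finset.HasAntidiagonal.antidiagonal a ×ˢ Finset.HasAntidiagonal.antidiagonal b,
          (∑ c ∈ E p q wz.1.1, T p' q' μ f c.1 c.2 wz.2.1) *
            (∑ d ∈ E p q wz.1.2, T p' q' μ g d.1 d.2 wz.2.2) := by
        refine Finset.sum_congr rfl fun wz _ => ?_
        rw [Finset.sum_mul_sum]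
        rw [Finset.sum_product]
    _ = ∑ uv ∈ Finset.HasAntidiagonal.antidiagonal e,
          MvPowerSeries.coeff (R := ℂ) uv.1 (newtonSubst p q p' q' μ f) *
            MvPowerSeries.coeff (R := ℂ) uv.2 (newtonSubst p q p' q' μ g) := by
        rw [sum_ad_fin2 e (fun u v => MvPowerSeries.coeff (R := ℂ) u (newtonSubst p q p' q' μ f) *
          MvPowerSeries.coeff (R := ℂ) v (newtonSubst p q p' q' μ g))]
        refine Finset.sum_congr rfl fun xy _ => ?_
        rw [coeff_newton, coeff_newton, apply0, apply0, apply1, apply1]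


lemma newton_add (p q p' q' : ℕ) (μ : ℂ) (f g : MvPowerSeries (Fin 2) ℂ) :
    newtonSubst p q p' q' μ (f + g) =
      newtonSubst p q p' q' μ f + newtonSubst p q p' q' μ g := by
  apply MvPowerSeries.ext; intro e
  rw [map_add, coeff_newton, coeff_newton, coeff_newton, ← Finset.sum_add_distrib]
  refine Finset.sum_congr rfl fun x _ => ?_
  simp only [T, map_add, add_mul]

lemma ind_eq_zero {x1 x2 : ℕ}
    (hz : (single (0:Fin 2) x1 + single 1 x2 : Fin 2 →₀ ℕ) = 0) : x1 = 0 ∧ x2 = 0 := by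
  constructor
  · have := congrArg (fun u : Fin 2 →₀ ℕ => u 0) hz
    simpa [apply0] using this
  · have := congrArg (fun u : Fin 2 →₀ ℕ => u 1) hz
    simpa [apply1] using this

lemma newton_one (p q p' q' : ℕ) (hp : 1 ≤ p) (hq : 1 ≤ q) (μ : ℂ) :
    newtonSubst p q p' q' μ 1 = 1 := by
  apply MvPowerSeries.ext; intro e
  rw [coeff_newton, MvPowerSeries.coeff_one]
  by_cases he : e = 0
  · subst he
    have h0 : ((0 : Fin 2 →₀ ℕ)) 0 = 0 := rfl
    have h1 : ((0 : Fin 2 →₀ ℕ)) 1 = 0 := rfl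
    rw [if_pos rfl, h0, h1]
    have hE : E p q 0 = {(0, 0)} := by
      ext x
      rw [mem_E hp hq, Finset.mem_singleton]
      constructor
      · intro h
        have h1 : x.1 ≤ p * x.1 := Nat.le_mul_of_pos_left x.1 hp
        have h2 : x.2 ≤ q * x.2 := Nat.le_mul_of_pos_left x.2 hq
        have : x.1 = 0 ∧ x.2 = 0 := by omega
        exact Prod.ext this.1 this.2
      · rintro rfl; simp
    rw [hE, Finset.sum_singleton]
    have : (single (0:Fin 2) (0:ℕ) + single 1 (0:ℕ) : Fin 2 →₀ ℕ) = 0 := by simp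
    simp [T, this, MvPowerSeries.coeff_zero_one]
  · rw [if_neg he]
    refine Finset.sum_eq_zero fun x hx => ?_
    rw [mem_E hp hq] at hx
    by_cases h0 : e 0 = 0
    · have he1 : e 1 ≠ 0 := by
        intro h1
        apply he
        rw [fin2eq e, h0, h1]; simp
      have h1 : x.1 ≤ p * x.1 := Nat.le_mul_of_pos_left x.1 hp
      have h2 : x.2 ≤ q * x.2 := Nat.le_mul_of_pos_left x.2 hq
      have hx2 : x.2 = 0 := by omega
      unfold T
      rw [hx2, Nat.choose_eq_zero_of_lt (by omega)]
      simp
    · have hne : (single (0:Fin 2) x.1 + single 1 x.2 : Fin 2 →₀ ℕ) ≠ 0 := by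
        intro hz
        obtain ⟨hz1, hz2⟩ := ind_eq_zero hz
        apply h0
        rw [← hx, hz1, hz2]; ring
      unfold T
      rw [MvPowerSeries.coeff_one, if_neg hne]
      simp

lemma newton_ker (p q p' q' : ℕ) (hp : 1 ≤ p) (hq : 1 ≤ q) (μ : ℂ) (hμ : μ ≠ 0)
    (f : MvPowerSeries (Fin 2) ℂ) (h0 : newtonSubst p q p' q' μ f = 0) : f = 0 := by
  apply MvPowerSeries.ext; intro d
  rw [map_zero]
  set a := p * d 0 + q * d 1 with ha
  have key : ∀ k b, a + 1 ≤ b + k → ∀ γ δ, p * γ + q * δ = a → b ≤ δ →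
      MvPowerSeries.coeff (R := ℂ) (single 0 γ + single 1 δ) f = 0 := by
    intro k
    induction k with
    | zero =>
      intro b hb γ δ hpq hbδ
      exfalso
      have : δ ≤ q * δ := Nat.le_mul_of_pos_left δ hq
      omega
    | succ k ih =>
      intro b hb γ δ hpq hbδ
      rcases Nat.lt_or_ge b δ with hlt | hge
      · exact ih (b + 1) (by omega) γ δ hpq (by omega)
      have hδb : δ = b := le_antisymm hge hbδ
      subst hδb
      have h2 : MvPowerSeries.coeff (R := ℂ) (single (0:Fin 2) a + single 1 δ) (newtonSubst p q p' q' μ f) = 0 := by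
        rw [h0, map_zero]
      rw [coeff_newton, apply0, apply1] at h2
      rw [Finset.sum_eq_single (γ, δ)] at h2
      · -- h2 : T ... f γ δ δ = 0
        unfold T at h2
        rw [Nat.choose_self] at h2
        have hμ1 : μ ^ (q' * γ + p' * δ) ≠ 0 := pow_ne_zero _ hμ
        have hμ2 : μ⁻¹ ^ (p' * δ) ≠ 0 := pow_ne_zero _ (inv_ne_zero hμ)
        rw [Nat.cast_one, mul_one, mul_eq_zero, mul_eq_zero] at h2
        tauto
      · intro x hxE hxne
        rw [mem_E hp hq] at hxE
        rcases Nat.lt_trichotomy x.2 δ with hc | hc | hc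
        · unfold T
          rw [Nat.choose_eq_zero_of_lt hc]
          simp
        · exfalso
          apply hxne
          rw [hc] at hxE
          have : p * x.1 = p * γ := by omega
          have hx1 : x.1 = γ := Nat.eq_of_mul_eq_mul_left (by omega) this
          exact Prod.ext hx1 hc
        · unfold T
          rw [ih (δ + 1) (by omega) x.1 x.2 hxE (by omega)]
          simp
      · intro hnot
        exfalso
        apply hnot
        rw [mem_E hp hq]
        exact hpq
  have hd : d = single 0 (d 0) + single 1 (d 1) := fin2eq d
  rw [hd]
  exact key (a + 1) 0 (by omega) (d 0) (d 1) rfl (Nat.zero_le _)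

end NewtonAux

open NewtonAux

/-- Definition 2.1 / Statement 19: the Newton map σ_{(p,q,μ)} (p, q coprime positive,
pp' - qq' = 1 with 0 < p' ≤ q, 0 ≤ q' < p, μ ∈ ℂ*) is an injective ring
homomorphism ℂ[[x,y]] → ℂ[[x₁,y₁]]: it is additive, multiplicative, unital, and
σ(f) = 0 implies f = 0. -/
theorem stmt_19 (p q p' q' : ℕ) (hp : 1 ≤ p) (hq : 1 ≤ q)
    (hcop : Nat.Coprime p q) (hp'₀ : 1 ≤ p') (hp' : p' ≤ q) (hq' : q' < p)
    (hB : p * p' = q * q' + 1) (μ : ℂ) (hμ : μ ≠ 0) :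
    (∀ f g : MvPowerSeries (Fin 2) ℂ,
      newtonSubst p q p' q' μ (f + g) =
        newtonSubst p q p' q' μ f + newtonSubst p q p' q' μ g) ∧
    (∀ f g : MvPowerSeries (Fin 2) ℂ,
      newtonSubst p q p' q' μ (f * g) =
        newtonSubst p q p' q' μ f * newtonSubst p q p' q' μ g) ∧
    newtonSubst p q p' q' μ 1 = 1 ∧
    Function.Injective (newtonSubst p q p' q' μ) := by
  refine ⟨fun f g => newton_add p q p' q' μ f g,
    fun f g => newton_mul p q p' q' hp hq μ f g,
    newton_one p q p' q' hp hq μ, ?_⟩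
  intro f g hfg
  have hsub : newtonSubst p q p' q' μ (f - g) = 0 := by
    have h1 : newtonSubst p q p' q' μ ((f - g) + g) =
        newtonSubst p q p' q' μ (f - g) + newtonSubst p q p' q' μ g :=
      newton_add p q p' q' μ (f - g) g
    rw [sub_add_cancel, hfg] at h1
    linear_combination (norm := abel) h1.symm
  have := newton_ker p q p' q' hp hq μ hμ (f - g) hsub
  exact sub_eq_zero.mp this
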